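/- Every globally defined trajectory of P starting in the simplex with product strictly between 0 and 1/27 is periodic: if γ : ℝ → ℝ³ is differentiable with γ'(t) = P(γ(t)) for all t ∈ ℝ, γ(0) ∈ Δ², and γ₁(0)·γ₂(0)·γ₃(0) ∈ (0, 1/27), then γ(t) ∈ Δ² for all t and there exists T > 0 such that γ(t + T) = γ(t) for all t ∈ ℝ. -/

import Mathlib

open Filter Set Topology

noncomputable section

/-- The rock–paper–scissors vector field `P` on `ℝ³`, with components
`P₁(x,y,z) = x(z-y)/2`, `P₂(x,y,z) = y(x-z)/2`, `P₃(x,y,z) = z(y-x)/2`. -/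
def Pfield : ℝ × ℝ × ℝ → ℝ × ℝ × ℝ :=
  fun p => (p.1 * (p.2.2 - p.2.1) / 2, p.2.1 * (p.1 - p.2.2) / 2, p.2.2 * (p.2.1 - p.1) / 2)

/-- The simplex `Δ² = {(x,y,z) : x,y,z ≥ 0, x+y+z = 1}`. -/
def simplex2 : Set (ℝ × ℝ × ℝ) :=
  {p | 0 ≤ p.1 ∧ 0 ≤ p.2.1 ∧ 0 ≤ p.2.2 ∧ p.1 + p.2.1 + p.2.2 = 1}

lemma simplex2_isClosed : IsClosed simplex2 := by
  have h1 : IsClosed {p : ℝ × ℝ × ℝ | 0 ≤ p.1} := isClosed_le continuous_const continuous_fst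
  have h2 : IsClosed {p : ℝ × ℝ × ℝ | 0 ≤ p.2.1} :=
    isClosed_le continuous_const (continuous_fst.comp continuous_snd)
  have h3 : IsClosed {p : ℝ × ℝ × ℝ | 0 ≤ p.2.2} :=
    isClosed_le continuous_const (continuous_snd.comp continuous_snd)
  have h4 : IsClosed {p : ℝ × ℝ × ℝ | p.1 + p.2.1 + p.2.2 = 1} :=
    isClosed_eq (((continuous_fst.add (continuous_fst.comp continuous_snd)).add
      (continuous_snd.comp continuous_snd))) continuous_const
  have : simplex2 = ({p : ℝ × ℝ × ℝ | 0 ≤ p.1} ∩ {p | 0 ≤ p.2.1}) ∩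
      ({p | 0 ≤ p.2.2} ∩ {p | p.1 + p.2.1 + p.2.2 = 1}) := by
    ext p; simp [simplex2, and_assoc]
  rw [this]
  exact (h1.inter h2).inter (h3.inter h4)

lemma simplex2_isCompact : IsCompact simplex2 := by
  refine IsCompact.of_isClosed_subset (isCompact_Icc (a := ((0:ℝ),(0:ℝ),(0:ℝ)))
    (b := ((1:ℝ),(1:ℝ),(1:ℝ)))) simplex2_isClosed ?_
  rintro ⟨px, py, pz⟩ ⟨h1, h2, h3, h4⟩
  simp only [Set.mem_Icc, Prod.le_def] at *
  refine ⟨⟨h1, h2, h3⟩, ⟨by linarith, by linarith, by linarith⟩⟩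

lemma key_ineq {x y z : ℝ} (hx : 0 < x) (hy : 0 < y) (hz : 0 < z)
    (hsum : x + y + z = 1) (hlt : x * y * z < 1/27) :
    0 < x * y + y * z + z * x - 9 * (x * y * z) := by
  have hne : ¬ (x = y ∧ y = z) := by
    rintro ⟨rfl, rfl⟩
    have : x = 1/3 := by linarith
    rw [this] at hlt; norm_num at hlt
  rcases not_and_or.mp hne with h | h
  · have h2 : 0 < (x - y)^2 := by have := sub_ne_zero.mpr h; positivity
    nlinarith [mul_pos hz h2, mul_nonneg hx.le (sq_nonneg (y - z)),
      mul_nonneg hy.le (sq_nonneg (z - x))]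
  · have h2 : 0 < (y - z)^2 := by have := sub_ne_zero.mpr h; positivity
    nlinarith [mul_pos hx h2, mul_nonneg hz.le (sq_nonneg (x - y)),
      mul_nonneg hy.le (sq_nonneg (z - x))]

lemma comp_bound {a b c a' b' c' D : ℝ} (ha : 0 ≤ a) (ha1 : a ≤ 1)
    (hb : 0 ≤ b') (hb1 : b' ≤ 1) (hc : 0 ≤ c') (hc1 : c' ≤ 1)
    (h1 : |a - a'| ≤ D) (h2 : |b - b'| ≤ D) (h3 : |c - c'| ≤ D) :
    |a * (c - b) / 2 - a' * (c' - b') / 2| ≤ 2 * D := by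
  have hD : 0 ≤ D := le_trans (abs_nonneg _) h1
  have e : a * (c - b) / 2 - a' * (c' - b') / 2
      = (a * (c - c') + a * (b' - b) + (a - a') * (c' - b')) / 2 := by ring
  rw [e, abs_div, abs_two]
  have b1 : |a * (c - c')| ≤ D := by
    rw [abs_mul, abs_of_nonneg ha]
    calc a * |c - c'| ≤ 1 * |c - c'| := mul_le_mul_of_nonneg_right ha1 (abs_nonneg _)
      _ ≤ D := by rw [one_mul]; exact h3
  have b2 : |a * (b' - b)| ≤ D := by
    rw [abs_mul, abs_of_nonneg ha, abs_sub_comm]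
    calc a * |b - b'| ≤ 1 * |b - b'| := mul_le_mul_of_nonneg_right ha1 (abs_nonneg _)
      _ ≤ D := by rw [one_mul]; exact h2
  have b3 : |(a - a') * (c' - b')| ≤ D := by
    rw [abs_mul]
    calc |a - a'| * |c' - b'| ≤ |a - a'| * 1 := by
          apply mul_le_mul_of_nonneg_left _ (abs_nonneg _)
          rw [abs_le]; constructor <;> linarith
      _ ≤ D := by rw [mul_one]; exact h1
  have habs := abs_add_three (a * (c - c')) (a * (b' - b)) ((a - a') * (c' - b'))
  linarith

lemma pfield_lipschitz : LipschitzOnWith 2 Pfield simplex2 := by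
  apply LipschitzOnWith.of_dist_le_mul
  rintro ⟨x, y, z⟩ ⟨hx, hy, hz, hs⟩ ⟨x', y', z'⟩ ⟨hx', hy', hz', hs'⟩
  simp only at hx hy hz hs hx' hy' hz' hs'
  have hx1 : x ≤ 1 := by linarith
  have hy1 : y ≤ 1 := by linarith
  have hx1' : x' ≤ 1 := by linarith
  have hy1' : y' ≤ 1 := by linarith
  have hz1' : z' ≤ 1 := by linarith
  have hz1 : z ≤ 1 := by linarith
  rw [Prod.dist_eq, Prod.dist_eq, Prod.dist_eq, Prod.dist_eq]
  simp only [Pfield, Real.dist_eq]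
  set D := max |x - x'| (max |y - y'| |z - z'|) with hD
  have hdx : |x - x'| ≤ D := le_max_left _ _
  have hdy : |y - y'| ≤ D := le_trans (le_max_left _ _) (le_max_right _ _)
  have hdz : |z - z'| ≤ D := le_trans (le_max_right _ _) (le_max_right _ _)
  push_cast
  rw [max_le_iff, max_le_iff]
  refine ⟨comp_bound hx hx1 hy' hy1' hz' hz1' hdx hdy hdz, ?_, ?_⟩
  · have := comp_bound hy hy1 hz' hz1' hx' hx1' hdy hdz hdx
    convert this using 2
  · have := comp_bound hz hz1 hx' hx1' hy' hy1' hdz hdx hdy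
    convert this using 2

lemma scale_aux {x y z x' y' z' s : ℝ} (hx : 0 < x) (hy : 0 < y) (hz : 0 < z)
    (hs0 : 0 < s) (hs1 : s < 1)
    (h1 : x' = (1 - s) * (1/3) + s * x) (h2 : y' = (1 - s) * (1/3) + s * y)
    (h3 : z' = (1 - s) * (1/3) + s * z)
    (hprod : x' * y' * z' = x * y * z) (hlt : x * y * z < 1/27) : False := by
  set w := 1 - s with hw
  have hw0 : 0 ≤ w := by linarith
  have hws : w + s = 1 := by ring
  have g1 : (1/3 : ℝ) ^ w * x ^ s ≤ x' := by
    rw [h1]; exact Real.geom_mean_le_arith_mean2_weighted hw0 hs0.le (by norm_num) hx.le hws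
  have g2 : (1/3 : ℝ) ^ w * y ^ s ≤ y' := by
    rw [h2]; exact Real.geom_mean_le_arith_mean2_weighted hw0 hs0.le (by norm_num) hy.le hws
  have g3 : (1/3 : ℝ) ^ w * z ^ s ≤ z' := by
    rw [h3]; exact Real.geom_mean_le_arith_mean2_weighted hw0 hs0.le (by norm_num) hz.le hws
  have pos1 : (0:ℝ) < (1/3 : ℝ) ^ w * x ^ s := by positivity
  have pos2 : (0:ℝ) < (1/3 : ℝ) ^ w * y ^ s := by positivity
  have pos3 : (0:ℝ) < (1/3 : ℝ) ^ w * z ^ s := by positivity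
  have hx'0 : 0 < x' := lt_of_lt_of_le pos1 g1
  have hy'0 : 0 < y' := lt_of_lt_of_le pos2 g2
  have hmul : ((1/3 : ℝ) ^ w * x ^ s) * ((1/3 : ℝ) ^ w * y ^ s) * ((1/3 : ℝ) ^ w * z ^ s)
      ≤ x' * y' * z' := by
    apply mul_le_mul (mul_le_mul g1 g2 pos2.le hx'0.le) g3 pos3.le
    exact mul_nonneg hx'0.le hy'0.le
  have hA : (1/3 : ℝ) ^ w * (1/3 : ℝ) ^ w * (1/3 : ℝ) ^ w = (1/27 : ℝ) ^ w := by
    rw [← Real.mul_rpow (by norm_num) (by norm_num), ← Real.mul_rpow (by norm_num) (by norm_num)]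
    norm_num
  have hB : x ^ s * y ^ s * z ^ s = (x * y * z) ^ s := by
    rw [Real.mul_rpow (by positivity) hz.le, Real.mul_rpow hx.le hy.le]
  have hfin : (1/27 : ℝ) ^ w * (x * y * z) ^ s ≤ x * y * z := by
    calc (1/27 : ℝ) ^ w * (x * y * z) ^ s
        = ((1/3 : ℝ) ^ w * x ^ s) * ((1/3 : ℝ) ^ w * y ^ s) * ((1/3 : ℝ) ^ w * z ^ s) := by
          rw [← hA, ← hB]; ring
      _ ≤ x' * y' * z' := hmul
      _ = x * y * z := hprod
  have hc : 0 < x * y * z := by positivity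
  have hlt2 : (x * y * z) ^ w < (1/27 : ℝ) ^ w := Real.rpow_lt_rpow hc.le hlt (by linarith)
  have hsplit : (x * y * z) = (x * y * z) ^ w * (x * y * z) ^ s := by
    rw [← Real.rpow_add hc, hws, Real.rpow_one]
  have hpos : (0:ℝ) < (x * y * z) ^ s := Real.rpow_pos_of_pos hc s
  nlinarith [mul_lt_mul_of_pos_right hlt2 hpos]

lemma lam_one {x y z x' y' z' lam : ℝ} (hx : 0 < x) (hy : 0 < y) (hz : 0 < z)
    (hx' : 0 < x') (hy' : 0 < y') (hz' : 0 < z')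
    (hsum : x + y + z = 1) (hsum' : x' + y' + z' = 1)
    (e1 : x' - 1/3 = lam * (x - 1/3)) (e2 : y' - 1/3 = lam * (y - 1/3))
    (hlam : 0 < lam)
    (hprod : x' * y' * z' = x * y * z) (hlt : x * y * z < 1/27) : lam = 1 := by
  have e3 : z' - 1/3 = lam * (z - 1/3) := by linear_combination -e1 - e2 + hsum' - lam * hsum
  rcases lt_trichotomy lam 1 with h | h | h
  · exact absurd (scale_aux hx hy hz hlam h
      (by linear_combination e1) (by linear_combination e2) (by linear_combination e3)
      hprod hlt) (by simp)
  · exact h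
  · have hinv0 : 0 < 1 / lam := by positivity
    have hinv1 : 1 / lam < 1 := by rw [div_lt_one hlam]; exact h
    have hlt' : x' * y' * z' < 1/27 := by rw [hprod]; exact hlt
    have f1 : x = (1 - 1/lam) * (1/3) + (1/lam) * x' := by
      rw [show x' = 1/3 + lam*(x-1/3) by linarith]; field_simp; ring
    have f2 : y = (1 - 1/lam) * (1/3) + (1/lam) * y' := by
      rw [show y' = 1/3 + lam*(y-1/3) by linarith]; field_simp; ring
    have f3 : z = (1 - 1/lam) * (1/3) + (1/lam) * z' := by
      rw [show z' = 1/3 + lam*(z-1/3) by linarith]; field_simp; ring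
    exact absurd (scale_aux (x := x') (y := y') (z := z') (x' := x) (y' := y) (z' := z)
      hx' hy' hz' hinv0 hinv1 f1 f2 f3 hprod.symm hlt') (by simp)

set_option maxHeartbeats 2000000 in
/-- Every globally defined trajectory of `P` starting in the simplex with product strictly
between `0` and `1/27` stays in the simplex and is periodic. -/
theorem rps_trajectories_periodic (γ : ℝ → ℝ × ℝ × ℝ)
    (hderiv : ∀ t : ℝ, HasDerivAt γ (Pfield (γ t)) t)
    (h0 : γ 0 ∈ simplex2)
    (hM : (γ 0).1 * (γ 0).2.1 * (γ 0).2.2 ∈ Set.Ioo (0 : ℝ) (1/27)) :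
    (∀ t : ℝ, γ t ∈ simplex2) ∧ ∃ T : ℝ, 0 < T ∧ ∀ t : ℝ, γ (t + T) = γ t := by
  obtain ⟨hx00, hy00, hz00, hsum00⟩ := h0
  obtain ⟨hc0, hc27⟩ := hM
  set c : ℝ := (γ 0).1 * (γ 0).2.1 * (γ 0).2.2 with hc_def
  -- coordinate derivatives
  have hX : ∀ t, HasDerivAt (fun s => (γ s).1) ((γ t).1 * ((γ t).2.2 - (γ t).2.1) / 2) t := by
    intro t
    have h := (ContinuousLinearMap.fst ℝ ℝ (ℝ × ℝ)).hasFDerivAt.comp_hasDerivAt t (hderiv t)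
    simp [Pfield] at h; exact h
  have hY : ∀ t, HasDerivAt (fun s => (γ s).2.1) ((γ t).2.1 * ((γ t).1 - (γ t).2.2) / 2) t := by
    intro t
    have h2 := (ContinuousLinearMap.snd ℝ ℝ (ℝ × ℝ)).hasFDerivAt.comp_hasDerivAt t (hderiv t)
    have h := (ContinuousLinearMap.fst ℝ ℝ ℝ).hasFDerivAt.comp_hasDerivAt t h2
    simp [Pfield] at h; exact h
  have hZ : ∀ t, HasDerivAt (fun s => (γ s).2.2) ((γ t).2.2 * ((γ t).2.1 - (γ t).1) / 2) t := by
    intro t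
    have h2 := (ContinuousLinearMap.snd ℝ ℝ (ℝ × ℝ)).hasFDerivAt.comp_hasDerivAt t (hderiv t)
    have h := (ContinuousLinearMap.snd ℝ ℝ ℝ).hasFDerivAt.comp_hasDerivAt t h2
    simp [Pfield] at h; exact h
  have hcontγ : Continuous γ := by
    rw [continuous_iff_continuousAt]; exact fun t => (hderiv t).continuousAt
  have hcX : Continuous (fun s => (γ s).1) := continuous_fst.comp hcontγ
  have hcY : Continuous (fun s => (γ s).2.1) := (continuous_fst.comp continuous_snd).comp hcontγ
  have hcZ : Continuous (fun s => (γ s).2.2) := (continuous_snd.comp continuous_snd).comp hcontγ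
  -- conserved quantities
  have hsum : ∀ t, (γ t).1 + (γ t).2.1 + (γ t).2.2 = 1 := by
    have hd : ∀ t, HasDerivAt (fun s => (γ s).1 + (γ s).2.1 + (γ s).2.2) 0 t := by
      intro t
      have h := ((hX t).add (hY t)).add (hZ t)
      exact h.congr_deriv (by ring)
    have hconst := is_const_of_deriv_eq_zero (fun t => (hd t).differentiableAt)
      (fun t => (hd t).deriv)
    intro t
    calc (γ t).1 + (γ t).2.1 + (γ t).2.2 = (γ 0).1 + (γ 0).2.1 + (γ 0).2.2 := hconst t 0
      _ = 1 := hsum00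
  have hm : ∀ t, (γ t).1 * (γ t).2.1 * (γ t).2.2 = c := by
    have hd : ∀ t, HasDerivAt (fun s => (γ s).1 * (γ s).2.1 * (γ s).2.2) 0 t := by
      intro t
      have h := ((hX t).mul (hY t)).mul (hZ t)
      exact h.congr_deriv (by simp only [Pi.mul_apply]; ring)
    have hconst := is_const_of_deriv_eq_zero (fun t => (hd t).differentiableAt)
      (fun t => (hd t).deriv)
    intro t; exact hconst t 0
  -- positivity of coordinates
  have hcpos : 0 < c := hc0
  have hXne : ∀ t, (γ t).1 ≠ 0 := by
    intro t h
    have := hm t; rw [h] at this; simp at this; rw [← this] at hcpos; norm_num at hcpos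
  have hYne : ∀ t, (γ t).2.1 ≠ 0 := by
    intro t h
    have := hm t; rw [h] at this; simp at this; rw [← this] at hcpos; norm_num at hcpos
  have hZne : ∀ t, (γ t).2.2 ≠ 0 := by
    intro t h
    have := hm t; rw [h] at this; simp at this; rw [← this] at hcpos; norm_num at hcpos
  have hsign : ∀ (f : ℝ → ℝ), Continuous f → (∀ t, f t ≠ 0) → 0 < f 0 → ∀ t, 0 < f t := by
    intro f hf hne h0f t
    by_contra hle
    push_neg at hle
    have hlt : f t < 0 := lt_of_le_of_ne hle (hne t)
    have h1 : (0:ℝ) ∈ uIcc (f 0) (f t) := by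
      rw [Set.mem_uIcc]; right; exact ⟨hlt.le, h0f.le⟩
    obtain ⟨s, _, hs⟩ := intermediate_value_uIcc (hf.continuousOn (s := uIcc 0 t)) h1
    exact hne s hs
  have hxpos : ∀ t, 0 < (γ t).1 :=
    hsign _ hcX hXne (lt_of_le_of_ne hx00 (Ne.symm (hXne 0)))
  have hypos : ∀ t, 0 < (γ t).2.1 :=
    hsign _ hcY hYne (lt_of_le_of_ne hy00 (Ne.symm (hYne 0)))
  have hzpos : ∀ t, 0 < (γ t).2.2 :=
    hsign _ hcZ hZne (lt_of_le_of_ne hz00 (Ne.symm (hZne 0)))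
  have part1 : ∀ t, γ t ∈ simplex2 :=
    fun t => ⟨(hxpos t).le, (hypos t).le, (hzpos t).le, hsum t⟩
  refine ⟨part1, ?_⟩
  have hxlt1 : ∀ t, (γ t).1 < 1 := fun t => by have := hsum t; nlinarith [hypos t, hzpos t]
  have hylt1 : ∀ t, (γ t).2.1 < 1 := fun t => by have := hsum t; nlinarith [hxpos t, hzpos t]
  -- the planar complex coordinate around the centroid
  set u : ℝ → ℝ := fun t => (γ t).1 - 1/3 with hu_def
  set v : ℝ → ℝ := fun t => (γ t).2.1 - 1/3 with hv_def
  set ζ : ℝ → ℂ := fun t => (⟨u t, v t⟩ : ℂ) with hζ_def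
  set xd : ℝ → ℝ := fun t => (γ t).1 * ((γ t).2.2 - (γ t).2.1) / 2 with hxd_def
  set yd : ℝ → ℝ := fun t => (γ t).2.1 * ((γ t).1 - (γ t).2.2) / 2 with hyd_def
  set d : ℝ → ℂ := fun t => (⟨xd t, yd t⟩ : ℂ) with hd_def
  have hu' : ∀ t, HasDerivAt u (xd t) t := fun t => (hX t).sub_const _
  have hv' : ∀ t, HasDerivAt v (yd t) t := fun t => (hY t).sub_const _
  have hmkDeriv : ∀ (f g : ℝ → ℝ) (f' g' : ℝ) (t : ℝ), HasDerivAt f f' t → HasDerivAt g g' t →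
      HasDerivAt (fun s => (⟨f s, g s⟩ : ℂ)) (⟨f', g'⟩ : ℂ) t := by
    intro f g f' g' t hf hg
    have h1 := Complex.ofRealCLM.hasFDerivAt.comp_hasDerivAt t hf
    have h2 := (Complex.ofRealCLM.hasFDerivAt.comp_hasDerivAt t hg).mul_const Complex.I
    have h := h1.add h2
    have e : (fun s => (⟨f s, g s⟩ : ℂ)) = fun s => (f s : ℂ) + (g s : ℂ) * Complex.I := by
      funext s; exact Complex.mk_eq_add_mul_I _ _
    rw [e]
    have := h.congr_deriv (by simp [Complex.mk_eq_add_mul_I] : _ = (⟨f', g'⟩ : ℂ))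
    exact this
  have hζ' : ∀ t, HasDerivAt ζ (d t) t := fun t => hmkDeriv u v _ _ t (hu' t) (hv' t)
  have hζne : ∀ t, ζ t ≠ 0 := by
    intro t h
    rw [Complex.ext_iff] at h
    obtain ⟨h1, h2⟩ := h
    simp only [hζ_def, Complex.zero_re, Complex.zero_im] at h1 h2
    have hx13 : (γ t).1 = 1/3 := by simp only [hu_def] at h1; linarith
    have hy13 : (γ t).2.1 = 1/3 := by simp only [hv_def] at h2; linarith
    have hz13 : (γ t).2.2 = 1/3 := by have := hsum t; rw [hx13, hy13] at this; linarith
    have := hm t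
    rw [hx13, hy13, hz13] at this
    norm_num at this
    rw [← this] at hc27
    norm_num at hc27
  have hcxd : Continuous xd := (hcX.mul (hcZ.sub hcY)).div_const 2
  have hcyd : Continuous yd := (hcY.mul (hcX.sub hcZ)).div_const 2
  have hcu : Continuous u := hcX.sub continuous_const
  have hcv : Continuous v := hcY.sub continuous_const
  have hmkCont : ∀ (f g : ℝ → ℝ), Continuous f → Continuous g →
      Continuous (fun s => (⟨f s, g s⟩ : ℂ)) := by
    intro f g hf hg
    have : (fun s => (⟨f s, g s⟩ : ℂ)) = fun s => (f s : ℂ) + (g s : ℂ) * Complex.I := by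
      funext s; exact Complex.mk_eq_add_mul_I _ _
    rw [this]
    exact (Complex.continuous_ofReal.comp hf).add
      ((Complex.continuous_ofReal.comp hg).mul continuous_const)
  have hcζ : Continuous ζ := hmkCont u v hcu hcv
  have hcd : Continuous d := hmkCont xd yd hcxd hcyd
  set f : ℝ → ℂ := fun t => d t / ζ t with hf_def
  have hcf : Continuous f := hcd.div hcζ hζne
  set F : ℝ → ℂ := fun t => ∫ s in (0:ℝ)..t, f s with hF_def
  have hF' : ∀ t, HasDerivAt F (f t) t := fun t => (hcf.integral_hasStrictDerivAt 0 t).hasDerivAt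
  have hF0 : F 0 = 0 := intervalIntegral.integral_same
  -- ζ t = ζ 0 * exp (F t)
  have hexp : ∀ t, ζ t = ζ 0 * Complex.exp (F t) := by
    have hG : ∀ t, HasDerivAt (fun s => ζ s * Complex.exp (-F s)) 0 t := by
      intro t
      have h1 := (hζ' t).mul (((hF' t).neg).cexp)
      refine h1.congr_deriv (Eq.symm ?_)
      have hcan : ζ t * (d t / ζ t) = d t := by
        rw [mul_comm]; exact div_mul_cancel₀ (d t) (hζne t)
      calc (0:ℂ) = d t * Complex.exp (-F t) + (ζ t * (d t / ζ t)) * (-Complex.exp (-F t)) := by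
            rw [hcan]; ring
        _ = d t * Complex.exp (-F t) + ζ t * (Complex.exp (-F t) * -(f t)) := by
            rw [hf_def]; ring
    have hconst := is_const_of_deriv_eq_zero (fun t => (hG t).differentiableAt)
      (fun t => (hG t).deriv)
    intro t
    have h1 : ζ t * Complex.exp (-F t) = ζ 0 := by
      have := hconst t 0
      simpa [hF0] using this
    calc ζ t = ζ t * Complex.exp (-F t) * Complex.exp (F t) := by
          rw [mul_assoc, ← Complex.exp_add]; simp
      _ = ζ 0 * Complex.exp (F t) := by rw [h1]
  -- the angle function
  set θ : ℝ → ℝ := fun t => (F t).im with hθ_def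
  have hθ' : ∀ t, HasDerivAt θ ((f t).im) t := fun t =>
    Complex.imCLM.hasFDerivAt.comp_hasDerivAt t (hF' t)
  have hθ0 : θ 0 = 0 := by simp [hθ_def, hF0]
  -- compactness: uniform lower bound for the angular numerator
  set Kc : Set (ℝ × ℝ × ℝ) := simplex2 ∩ {p | p.1 * p.2.1 * p.2.2 = c} with hKc_def
  have hKc_closed : IsClosed Kc := simplex2_isClosed.inter
    (isClosed_eq ((continuous_fst.mul (continuous_fst.comp continuous_snd)).mul
      (continuous_snd.comp continuous_snd)) continuous_const)
  have hKc_cpt : IsCompact Kc :=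
    simplex2_isCompact.of_isClosed_subset hKc_closed Set.inter_subset_left
  set Wfun : ℝ × ℝ × ℝ → ℝ :=
    fun p => (p.1 * p.2.1 + p.2.1 * p.2.2 + p.2.2 * p.1 - 9 * (p.1 * p.2.1 * p.2.2)) / 6
    with hW_def
  have hWcont : Continuous Wfun := by fun_prop
  have hKne : Kc.Nonempty := ⟨γ 0, part1 0, hm 0⟩
  obtain ⟨p₀, hp₀K, hp₀min⟩ := hKc_cpt.exists_isMinOn hKne hWcont.continuousOn
  set δ : ℝ := Wfun p₀ with hδ_def
  have hδpos : 0 < δ := by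
    obtain ⟨⟨h1, h2, h3, h4⟩, h5⟩ := hp₀K
    simp only [Set.mem_setOf_eq] at h5
    have hxp : 0 < p₀.1 := by
      rcases h1.lt_or_eq with h | h; · exact h
      exfalso; rw [← h] at h5; simp at h5; rw [← h5] at hc0; norm_num at hc0
    have hyp : 0 < p₀.2.1 := by
      rcases h2.lt_or_eq with h | h; · exact h
      exfalso; rw [← h] at h5; simp at h5; rw [← h5] at hc0; norm_num at hc0
    have hzp : 0 < p₀.2.2 := by
      rcases h3.lt_or_eq with h | h; · exact h
      exfalso; rw [← h] at h5; simp at h5; rw [← h5] at hc0; norm_num at hc0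
    have hklt : p₀.1 * p₀.2.1 * p₀.2.2 < 1/27 := by rw [h5]; exact hc27
    have := key_ineq hxp hyp hzp h4 hklt
    simp only [hδ_def, hW_def]; linarith
  have hWγ : ∀ t, δ ≤ Wfun (γ t) := fun t =>
    isMinOn_iff.mp hp₀min (γ t) ⟨part1 t, hm t⟩
  -- lower bound for the angular speed
  have him : ∀ t, δ/2 ≤ (f t).im := by
    intro t
    have hns : 0 < Complex.normSq (ζ t) := Complex.normSq_pos.mpr (hζne t)
    have hnseq : Complex.normSq (ζ t) = u t ^ 2 + v t ^ 2 := by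
      simp [hζ_def, Complex.normSq_mk]; ring
    have hns2 : Complex.normSq (ζ t) ≤ 2 := by
      rw [hnseq]
      simp only [hu_def, hv_def]
      nlinarith [hxpos t, hxlt1 t, hypos t, hylt1 t]
    have hfim : (f t).im = (yd t * u t - xd t * v t) / Complex.normSq (ζ t) := by
      show (d t / ζ t).im = _
      rw [Complex.div_im]
      have h1 : (d t).im = yd t := rfl
      have h2 : (d t).re = xd t := rfl
      have h3 : (ζ t).re = u t := rfl
      have h4 : (ζ t).im = v t := rfl
      rw [h1, h2, h3, h4]; ring
    have hWeq : yd t * u t - xd t * v t = Wfun (γ t) := by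
      simp only [hW_def, hyd_def, hxd_def, hu_def, hv_def]
      linear_combination ((γ t).1 * (γ t).2.1 / 2) * hsum t
    rw [hfim, hWeq]
    rw [div_le_div_iff₀ two_pos hns]
    nlinarith [hWγ t, hns2, hns]
  -- the angle grows linearly
  have hcθ : Continuous θ := by
    rw [continuous_iff_continuousAt]; exact fun t => (hθ' t).continuousAt
  have hgrow : ∀ t : ℝ, 0 ≤ t → δ/2 * t ≤ θ t := by
    intro t ht
    have hmono : Monotone (fun s => θ s - δ/2 * s) := by
      have hds : ∀ s : ℝ, HasDerivAt (fun r => θ r - δ/2 * r) ((f s).im - δ/2) s := by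
        intro s
        have hid : HasDerivAt (fun y : ℝ => δ/2 * y) (δ/2) s := by
          simpa using (hasDerivAt_id s).const_mul (δ/2)
        exact (hθ' s).sub hid
      apply monotone_of_deriv_nonneg
      · exact fun s => (hds s).differentiableAt
      · intro s
        rw [(hds s).deriv]
        have := him s; linarith
    have := hmono ht
    simp only at this
    rw [hθ0] at this
    linarith
  set Tb : ℝ := (4 * Real.pi + 2) / δ with hTb_def
  have hTb0 : 0 ≤ Tb := by positivity
  have hθTb : 2 * Real.pi + 1 ≤ θ Tb := by
    have := hgrow Tb hTb0
    have heq : δ/2 * Tb = 2 * Real.pi + 1 := by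
      rw [hTb_def]; field_simp; ring
    linarith
  have hivt := intermediate_value_Icc hTb0 hcθ.continuousOn
  have hmem : 2 * Real.pi ∈ Icc (θ 0) (θ Tb) := by
    rw [hθ0]; exact ⟨by positivity, by linarith⟩
  obtain ⟨T, hTmem, hθT⟩ := hivt hmem
  have hT0 : 0 < T := by
    rcases hTmem.1.lt_or_eq with h | h; · exact h
    exfalso
    have h2 : θ T = 0 := by rw [← h, hθ0]
    rw [h2] at hθT
    have := Real.pi_pos; linarith
  -- at time T the complex coordinate is a positive multiple of the initial one
  have hFTim : (F T).im = 2 * Real.pi := hθT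
  have hexpT : Complex.exp (F T) = ((Real.exp ((F T).re) : ℝ) : ℂ) := by
    have h2 : Complex.exp (F T) = Complex.exp ((F T).re : ℂ) *
        Complex.exp (((F T).im : ℂ) * Complex.I) := by
      rw [← Complex.exp_add, Complex.re_add_im]
    rw [h2, hFTim]
    push_cast
    rw [Complex.exp_two_pi_mul_I, mul_one]
  set lam : ℝ := Real.exp ((F T).re) with hlam_def
  have hlam0 : 0 < lam := Real.exp_pos _
  have hζT : ζ T = ζ 0 * (lam : ℂ) := by rw [hexp T, hexpT]
  have huT : u T = u 0 * lam := by
    have h := congrArg Complex.re hζT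
    simpa [Complex.mul_re] using h
  have hvT : v T = v 0 * lam := by
    have h := congrArg Complex.im hζT
    simpa [Complex.mul_im] using h
  have e1 : (γ T).1 - 1/3 = lam * ((γ 0).1 - 1/3) := by
    have := huT; simp only [hu_def] at this; linarith [this]
  have e2 : (γ T).2.1 - 1/3 = lam * ((γ 0).2.1 - 1/3) := by
    have := hvT; simp only [hv_def] at this; linarith [this]
  have hlam1 : lam = 1 := by
    refine lam_one (hxpos 0) (hypos 0) (hzpos 0) (hxpos T) (hypos T) (hzpos T)
      (hsum 0) (hsum T) e1 e2 hlam0 ?_ hc27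
    rw [hm T, hm 0]
  have hxT : (γ T).1 = (γ 0).1 := by rw [hlam1] at e1; linarith
  have hyT : (γ T).2.1 = (γ 0).2.1 := by rw [hlam1] at e2; linarith
  have hzT : (γ T).2.2 = (γ 0).2.2 := by
    have h1 := hsum T; have h2 := hsum 0; rw [hxT, hyT] at h1; linarith
  have hγT : γ T = γ 0 := by
    exact Prod.ext_iff.mpr ⟨hxT, Prod.ext_iff.mpr ⟨hyT, hzT⟩⟩
  -- periodicity via uniqueness of solutions
  refine ⟨T, hT0, ?_⟩
  intro t
  have hshift : ∀ s : ℝ, HasDerivAt (fun r => γ (r + T)) (Pfield (γ (s + T))) s := by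
    intro s
    have h1 : HasDerivAt (fun r : ℝ => r + T) 1 s := (hasDerivAt_id s).add_const T
    have := HasDerivAt.scomp s (hderiv (s + T)) h1
    simp at this; exact this
  have ht0mem : (0:ℝ) ∈ Ioo (-(|t| + 1)) (|t| + 1) := by
    exact ⟨by nlinarith [abs_nonneg t], by positivity⟩
  have hEq := ODE_solution_unique_of_mem_Icc
    (v := fun _ p => Pfield p) (s := fun _ => simplex2) (K := 2)
    (f := γ) (g := fun r => γ (r + T))
    (t₀ := (0:ℝ)) (a := -(|t| + 1)) (b := |t| + 1)
    (fun _ _ => pfield_lipschitz) ht0mem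
    hcontγ.continuousOn
    (fun s _ => hderiv s)
    (fun s _ => part1 s)
    ((hcontγ.comp (continuous_id.add continuous_const)).continuousOn)
    (fun s _ => hshift s)
    (fun s _ => part1 (s + T))
    (by simpa using hγT.symm)
  have htmem : t ∈ Icc (-(|t| + 1)) (|t| + 1) := by
    constructor
    · have := neg_abs_le t; linarith
    · have := le_abs_self t; linarith
  exact (hEq htmem).symm
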